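/- Soundness of CHRmp for deletion-acyclic programs with set-rules: if a massively parallel set-based transition S ⇶ T is performed in a deletion-acyclic program P, then there exists a multiset G' containing the same underlying set of constraints as the goal of S (with possibly higher multiplicities) such that the state with goal G' reaches, by a finite sequence of ordinary sequential multiset transitions of P extended with set-rules (rules removing duplicate copies of a constraint), a state T' whose underlying set of constraints equals that of T. -/

import Mathlib

/-- A rule instance: kept head, removed head, body. -/
abbrev RuleInst (C : Type*) := Finset C × Finset C × Finset C

variable {C : Type*} [DecidableEq C]

/-- A rule instance is applicable in a set-based state `S`. -/
def applicable (P : Set (RuleInst C)) (S : Finset C) (ρ : RuleInst C) : Prop :=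
  ρ ∈ P ∧ ρ.1 ∪ ρ.2.1 ⊆ S

/-- The massively parallel set-based CHRmp transition: apply any nonempty
(finite) subset `R` of the applicable rule instances simultaneously. -/
def mpStep (P : Set (RuleInst C)) (S T : Finset C) : Prop :=
  ∃ R : Finset (RuleInst C), R.Nonempty ∧ (∀ ρ ∈ R, applicable P S ρ) ∧
    T = (S \ R.biUnion (fun ρ => ρ.2.1)) ∪ R.biUnion (fun ρ => ρ.2.2)

/-- Deletion dependency in state `S`: kept constraint `c` is required to
remove constraint `d` in some applicable rule instance. -/
def delDep (P : Set (RuleInst C)) (S : Finset C) (c d : C) : Prop :=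
  ∃ ρ : RuleInst C, applicable P S ρ ∧ c ∈ ρ.1 ∧ d ∈ ρ.2.1

/-- A program is deletion-acyclic if on every state making a transition the
transitive closure of the deletion dependency is irreflexive. -/
def deletionAcyclic (P : Set (RuleInst C)) : Prop :=
  ∀ S T : Finset C, mpStep P S T →
    ∀ c : C, ¬ Relation.TransGen (delDep P S) c c

/-- Ordinary sequential multiset CHR transition for the program extended with
set-rules (which remove duplicate copies of a constraint). -/
def seqStep (P : Set (RuleInst C)) (m m' : Multiset C) : Prop :=
  (∃ ρ ∈ P, ρ.1.val + ρ.2.1.val ≤ m ∧ m' = m - ρ.2.1.val + ρ.2.2.val) ∨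
  (∃ (c : C) (m₀ : Multiset C), m = c ::ₘ c ::ₘ m₀ ∧ m' = c ::ₘ m₀)

section Aux

/-- Auxiliary priority relation on rule instances: `σ` must fire before `ρ`
because `σ` keeps a constraint that `ρ` removes. -/
def relBefore (P : Set (RuleInst C)) (S : Finset C) (σ ρ : RuleInst C) : Prop :=
  applicable P S σ ∧ applicable P S ρ ∧ ∃ c, c ∈ σ.1 ∧ c ∈ ρ.2.1

lemma kept_removed_disjoint {P : Set (RuleInst C)} {S : Finset C}
    (hirr : ∀ c, ¬ Relation.TransGen (delDep P S) c c)
    {ρ : RuleInst C} (h : applicable P S ρ) {c : C} (h1 : c ∈ ρ.1) (h2 : c ∈ ρ.2.1) :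
    False :=
  hirr c (Relation.TransGen.single ⟨ρ, h, h1, h2⟩)

lemma relBefore_chain {P : Set (RuleInst C)} {S : Finset C} {σ ρ : RuleInst C}
    (h : Relation.TransGen (relBefore P S) σ ρ) :
    applicable P S σ ∧ applicable P S ρ ∧
      ∃ c e, c ∈ σ.1 ∧ e ∈ ρ.2.1 ∧ Relation.ReflTransGen (delDep P S) e c := by
  induction h with
  | single h =>
    obtain ⟨hσ, hρ, c, hc1, hc2⟩ := h
    exact ⟨hσ, hρ, c, c, hc1, hc2, Relation.ReflTransGen.refl⟩
  | tail hst hrel ih =>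
    obtain ⟨hσ, hτ, c, e, hc1, he, hrt⟩ := ih
    obtain ⟨hτ', hρ, f, hf1, hf2⟩ := hrel
    exact ⟨hσ, hρ, c, f, hc1, hf2, Relation.ReflTransGen.head ⟨_, hτ', hf1, he⟩ hrt⟩

lemma relBefore_irrefl {P : Set (RuleInst C)} {S : Finset C}
    (hirr : ∀ c, ¬ Relation.TransGen (delDep P S) c c) (ρ : RuleInst C) :
    ¬ Relation.TransGen (relBefore P S) ρ ρ := by
  intro h
  obtain ⟨hρ, -, c, e, hc1, he, hrt⟩ := relBefore_chain h
  exact hirr c (Relation.TransGen.head' ⟨ρ, hρ, hc1, he⟩ hrt)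

lemma exists_min_rule {P : Set (RuleInst C)} {S : Finset C}
    (hirr : ∀ c, ¬ Relation.TransGen (delDep P S) c c) :
    ∀ R : Finset (RuleInst C), R.Nonempty →
      ∃ ρ₀ ∈ R, ∀ σ ∈ R, ¬ relBefore P S σ ρ₀ := by
  intro R
  induction R using Finset.strongInduction with
  | _ R ih =>
    intro hR
    obtain ⟨ρ, hρ⟩ := hR
    by_cases h : ∀ σ ∈ R, ¬ relBefore P S σ ρ
    · exact ⟨ρ, hρ, h⟩
    · push_neg at h
      obtain ⟨σ, hσR, hσ⟩ := h
      classical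
      set R' := R.filter (fun τ => Relation.TransGen (relBefore P S) τ ρ) with hR'def
      have hss : R' ⊂ R := by
        refine ⟨Finset.filter_subset _ _, fun hsub => ?_⟩
        exact relBefore_irrefl hirr ρ (Finset.mem_filter.1 (hsub hρ)).2
      obtain ⟨ρ₀, hρ₀R', hmin⟩ := ih R' hss ⟨σ, Finset.mem_filter.2 ⟨hσR, .single hσ⟩⟩
      refine ⟨ρ₀, Finset.filter_subset _ _ hρ₀R', fun τ hτ hrel => ?_⟩
      exact hmin τ (Finset.mem_filter.2 ⟨hτ, .head hrel (Finset.mem_filter.1 hρ₀R').2⟩) hrel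

lemma sim_lemma (P : Set (RuleInst C)) (S : Finset C)
    (hirr : ∀ c, ¬ Relation.TransGen (delDep P S) c c) :
    ∀ R : Finset (RuleInst C), (∀ ρ ∈ R, applicable P S ρ) →
    ∀ m : Multiset C, (∑ ρ ∈ R, ρ.2.1.val) ≤ m →
    (∀ ρ ∈ R, ∀ c ∈ ρ.1, c ∈ m) →
    Relation.ReflTransGen (seqStep P) m
      (m - ∑ ρ ∈ R, ρ.2.1.val + ∑ ρ ∈ R, ρ.2.2.val) := by
  intro R
  induction R using Finset.strongInduction with
  | _ R ih =>
    intro happ m hle hkept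
    rcases R.eq_empty_or_nonempty with rfl | hne
    · simp only [Finset.sum_empty, Multiset.sub_zero, add_zero]
      exact Relation.ReflTransGen.refl
    · obtain ⟨ρ₀, hρ₀, hmin⟩ := exists_min_rule hirr R hne
      have happ₀ := happ ρ₀ hρ₀
      have hDsplit : (∑ ρ ∈ R.erase ρ₀, ρ.2.1.val) + ρ₀.2.1.val = ∑ ρ ∈ R, ρ.2.1.val :=
        Finset.sum_erase_add _ _ hρ₀
      have hBsplit : (∑ ρ ∈ R.erase ρ₀, ρ.2.2.val) + ρ₀.2.2.val = ∑ ρ ∈ R, ρ.2.2.val :=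
        Finset.sum_erase_add _ _ hρ₀
      have hDle : ∀ c : C, Multiset.count c (∑ ρ ∈ R, ρ.2.1.val) ≤ m.count c :=
        fun c => Multiset.le_iff_count.mp hle c
      have hDsplitc : ∀ c : C,
          Multiset.count c (∑ ρ ∈ R.erase ρ₀, ρ.2.1.val) + Multiset.count c ρ₀.2.1.val
            = Multiset.count c (∑ ρ ∈ R, ρ.2.1.val) := by
        intro c
        rw [← hDsplit, Multiset.count_add]
      -- the head step fires ρ₀
      have hheads : ρ₀.1.val + ρ₀.2.1.val ≤ m := by
        rw [Multiset.le_iff_count]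
        intro c
        rw [Multiset.count_add]
        by_cases h1 : c ∈ ρ₀.1
        · by_cases h2 : c ∈ ρ₀.2.1
          · exact absurd (kept_removed_disjoint hirr happ₀ h1 h2) (by simp)
          · have := Multiset.count_pos.mpr (hkept ρ₀ hρ₀ c h1)
            rw [Multiset.count_eq_one_of_mem ρ₀.1.nodup (Finset.mem_def.1 h1),
              Multiset.count_eq_zero_of_notMem (fun hc => h2 (Finset.mem_def.2 hc))]
            omega
        · rw [Multiset.count_eq_zero_of_notMem (fun hc => h1 (Finset.mem_def.2 hc)), zero_add]
          by_cases h2 : c ∈ ρ₀.2.1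
          · have h3 : ρ₀.2.1.val.count c ≤ Multiset.count c (∑ ρ ∈ R, ρ.2.1.val) := by
              rw [Multiset.count_sum']
              exact Finset.single_le_sum (f := fun ρ : RuleInst C => Multiset.count c ρ.2.1.val) (fun i _ => Nat.zero_le _) hρ₀
            exact le_trans h3 (hDle c)
          · rw [Multiset.count_eq_zero_of_notMem (fun hc => h2 (Finset.mem_def.2 hc))]
            exact Nat.zero_le _
      have hstep1 : seqStep P m (m - ρ₀.2.1.val + ρ₀.2.2.val) :=
        Or.inl ⟨ρ₀, happ₀.1, hheads, rfl⟩
      -- no remaining rule keeps a constraint removed by ρ₀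
      have hnotkeep : ∀ ρ ∈ R, ∀ c ∈ ρ.1, c ∉ ρ₀.2.1 := by
        intro ρ hρ c hc1 hc2
        exact hmin ρ hρ ⟨happ ρ hρ, happ₀, c, hc1, hc2⟩
      -- invariants for the recursive call
      have hle' : (∑ ρ ∈ R.erase ρ₀, ρ.2.1.val) ≤ m - ρ₀.2.1.val + ρ₀.2.2.val := by
        rw [Multiset.le_iff_count]
        intro c
        rw [Multiset.count_add, Multiset.count_sub]
        have := hDle c
        have := hDsplitc c
        omega
      have hkept' : ∀ ρ ∈ R.erase ρ₀, ∀ c ∈ ρ.1, c ∈ m - ρ₀.2.1.val + ρ₀.2.2.val := by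
        intro ρ hρ c hc
        have hρR := Finset.mem_of_mem_erase hρ
        have h2 : c ∉ ρ₀.2.1 := hnotkeep ρ hρR c hc
        have hmc := Multiset.count_pos.mpr (hkept ρ hρR c hc)
        rw [← Multiset.count_pos, Multiset.count_add, Multiset.count_sub,
          Multiset.count_eq_zero_of_notMem (fun hc' => h2 (Finset.mem_def.2 hc'))]
        omega
      have hrest := ih (R.erase ρ₀) (Finset.erase_ssubset hρ₀)
        (fun ρ hρ => happ ρ (Finset.mem_of_mem_erase hρ))
        (m - ρ₀.2.1.val + ρ₀.2.2.val) hle' hkept'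
      have hfinal : m - ρ₀.2.1.val + ρ₀.2.2.val - (∑ ρ ∈ R.erase ρ₀, ρ.2.1.val)
            + (∑ ρ ∈ R.erase ρ₀, ρ.2.2.val)
          = m - ∑ ρ ∈ R, ρ.2.1.val + ∑ ρ ∈ R, ρ.2.2.val := by
        ext c
        have h1 := hDsplitc c
        have h2 := hDle c
        have h3 : Multiset.count c (∑ ρ ∈ R.erase ρ₀, ρ.2.2.val) + Multiset.count c ρ₀.2.2.val
            = Multiset.count c (∑ ρ ∈ R, ρ.2.2.val) := by
          rw [← hBsplit, Multiset.count_add]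
        simp only [Multiset.count_add, Multiset.count_sub]
        omega
      exact Relation.ReflTransGen.head hstep1 (hfinal ▸ hrest)

end Aux

/-- Soundness of CHRmp for deletion-acyclic programs with set-rules: every
massively parallel set-based step can be simulated, starting from a multiset
with the same underlying set, by sequential multiset steps of the program
extended with set-rules, ending in a multiset with the underlying set of the
target. -/
theorem chrmp_soundness (P : Set (RuleInst C)) (hacyc : deletionAcyclic P)
    {S T : Finset C} (hstep : mpStep P S T) :
    ∃ G' T' : Multiset C, G'.toFinset = S ∧
      Relation.ReflTransGen (seqStep P) G' T' ∧ T'.toFinset = T := by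
  obtain ⟨R, hRne, happ, hT⟩ := hstep
  have hirr : ∀ c, ¬ Relation.TransGen (delDep P S) c c :=
    hacyc S T ⟨R, hRne, happ, hT⟩
  set D : Multiset C := ∑ ρ ∈ R, ρ.2.1.val with hD
  set B : Multiset C := ∑ ρ ∈ R, ρ.2.2.val with hB
  -- removed constraints live in S
  have hDS : ∀ c : C, c ∉ S → D.count c = 0 := by
    intro c hc
    rw [Multiset.count_eq_zero]
    intro hmem
    obtain ⟨ρ, hρR, hcρ⟩ := Multiset.mem_sum.1 hmem
    exact hc ((happ ρ hρR).2 (Finset.mem_union_right _ (Finset.mem_def.2 hcρ)))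
  have hDpos : ∀ c : C, 0 < D.count c ↔ ∃ ρ ∈ R, c ∈ ρ.2.1 := by
    intro c
    rw [Multiset.count_pos, Multiset.mem_sum]
    exact ⟨fun ⟨ρ, h1, h2⟩ => ⟨ρ, h1, Finset.mem_def.2 h2⟩,
      fun ⟨ρ, h1, h2⟩ => ⟨ρ, h1, Finset.mem_def.1 h2⟩⟩
  have hBpos : ∀ c : C, 0 < B.count c ↔ ∃ ρ ∈ R, c ∈ ρ.2.2 := by
    intro c
    rw [Multiset.count_pos, Multiset.mem_sum]
    exact ⟨fun ⟨ρ, h1, h2⟩ => ⟨ρ, h1, Finset.mem_def.2 h2⟩,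
      fun ⟨ρ, h1, h2⟩ => ⟨ρ, h1, Finset.mem_def.1 h2⟩⟩
  -- the initial multiset
  refine ⟨D + (S.val - D), D + (S.val - D) - D + B, ?_, ?_, ?_⟩
  · -- underlying set is S
    ext c
    rw [Multiset.mem_toFinset, ← Multiset.count_pos, Multiset.count_add, Multiset.count_sub]
    by_cases hc : c ∈ S
    · have h1 : S.val.count c = 1 := Multiset.count_eq_one_of_mem S.nodup (Finset.mem_def.1 hc)
      simp only [hc, iff_true, h1]
      omega
    · have h0 := hDS c hc
      have h1 : S.val.count c = 0 :=
        Multiset.count_eq_zero_of_notMem (fun h => hc (Finset.mem_def.2 h))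
      simp only [hc, iff_false, h0, h1]
      omega
  · -- the sequential derivation
    refine sim_lemma P S hirr R happ _ (Multiset.le_add_right _ _) ?_
    intro ρ hρ c hc
    have hcS : c ∈ S := (happ ρ hρ).2 (Finset.mem_union_left _ hc)
    rw [← Multiset.count_pos, Multiset.count_add, Multiset.count_sub]
    have h1 : S.val.count c = 1 := Multiset.count_eq_one_of_mem S.nodup (Finset.mem_def.1 hcS)
    omega
  · -- underlying set of the result is T
    ext c
    rw [Multiset.mem_toFinset, ← Multiset.count_pos, Multiset.count_add, Multiset.count_sub,
      Multiset.count_add, Multiset.count_sub]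
    rw [hT]
    simp only [Finset.mem_union, Finset.mem_sdiff, Finset.mem_biUnion]
    rw [← hDpos, ← hBpos]
    by_cases hc : c ∈ S
    · have h1 : S.val.count c = 1 := Multiset.count_eq_one_of_mem S.nodup (Finset.mem_def.1 hc)
      simp only [hc, true_and, h1]
      omega
    · have h0 := hDS c hc
      have h1 : S.val.count c = 0 :=
        Multiset.count_eq_zero_of_notMem (fun h => hc (Finset.mem_def.2 h))
      simp only [hc, false_and, false_or, h0, h1]
      omega
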